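/- Let F be a field, n ≥ 1, and s = S|n a nontrivial initial segment of an infinite sequence S over F. Write LC_k for the linear complexity of S|k. Then: (i) either LC_{n+1} = LC_n, or LC_{n+1} = n + 1 − LC_n > LC_n; (ii) if no minimal polynomial of s annihilates S|(n+1), then LC_{n+1} = max{LC_n, n + 1 − LC_n}. -/

import Mathlib

open Polynomial in
/-- φ of degree d satisfies the annihilating condition for the length-`n` sequence
`s₀, s₋₁, …, s₁₋ₙ` (where `s k` denotes `s₋ₖ`). -/
def AnnCond {D : Type*} [CommRing D] (n : ℕ) (s : ℕ → D) (φ : Polynomial D) : Prop :=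
  ∀ t : ℕ, t + φ.natDegree + 1 ≤ n →
    ∑ j ∈ Finset.range (φ.natDegree + 1), φ.coeff j * s (t + j) = 0

/-- φ is a nonzero annihilating polynomial of the length-`n` sequence `s`. -/
def Annihilates {D : Type*} [CommRing D] (n : ℕ) (s : ℕ → D) (φ : Polynomial D) : Prop :=
  φ ≠ 0 ∧ AnnCond n s φ

/-- Linear complexity: minimal degree of a nonzero annihilating polynomial. -/
noncomputable def LC {D : Type*} [CommRing D] (n : ℕ) (s : ℕ → D) : ℕ :=
  sInf {d | ∃ φ : Polynomial D, Annihilates n s φ ∧ φ.natDegree = d}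

/-- `x·ψ = [φ·s̄]`, the strictly-positive-degree part of `φ·s̄`, expressed coefficientwise. -/
def SeqNum {D : Type*} [CommRing D] (n : ℕ) (s : ℕ → D) (φ ψ : Polynomial D) : Prop :=
  ∀ k : ℕ, ψ.coeff k = ∑ j ∈ Finset.range (φ.natDegree + 1),
    if k + 1 ≤ j ∧ j - (k + 1) < n then φ.coeff j * s (j - (k + 1)) else 0

/-- `(φ, ψ)` is a solution for the length-`n` sequence `s`. -/
def IsSolution {D : Type*} [CommRing D] (n : ℕ) (s : ℕ → D) (φ ψ : Polynomial D) : Prop :=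
  Annihilates n s φ ∧ SeqNum n s φ ψ

section Helpers

open Polynomial

variable {F : Type*} [Field F]

lemma annCond_mono {m n : ℕ} (h : m ≤ n) {S : ℕ → F} {φ : F[X]} (hφ : AnnCond n S φ) :
    AnnCond m S φ := fun t ht => hφ t (le_trans ht h)

lemma ann_Xpow (n : ℕ) (S : ℕ → F) : Annihilates n S (X ^ n) := by
  refine ⟨pow_ne_zero _ X_ne_zero, fun t ht => ?_⟩
  rw [natDegree_X_pow] at ht
  exact absurd ht (by omega)

lemma lc_set_nonempty (n : ℕ) (S : ℕ → F) :
    {d | ∃ φ : Polynomial F, Annihilates n S φ ∧ φ.natDegree = d}.Nonempty :=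
  ⟨n, X ^ n, ann_Xpow n S, natDegree_X_pow n⟩

lemma lc_spec (n : ℕ) (S : ℕ → F) :
    ∃ φ : F[X], Annihilates n S φ ∧ φ.natDegree = LC n S :=
  Nat.sInf_mem (lc_set_nonempty n S)

lemma lc_le {n : ℕ} {S : ℕ → F} {φ : F[X]} (h : Annihilates n S φ) :
    LC n S ≤ φ.natDegree := Nat.sInf_le ⟨φ, h, rfl⟩

lemma lc_le_self (n : ℕ) (S : ℕ → F) : LC n S ≤ n := by
  have := lc_le (ann_Xpow n S); rwa [natDegree_X_pow] at this

lemma lc_mono {m n : ℕ} (h : m ≤ n) (S : ℕ → F) : LC m S ≤ LC n S := by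
  obtain ⟨φ, hφ, hdeg⟩ := lc_spec n S
  exact hdeg ▸ lc_le ⟨hφ.1, annCond_mono h hφ.2⟩

lemma lc_zero (S : ℕ → F) : LC 0 S = 0 :=
  Nat.le_zero.mp (lc_le_self 0 S)

lemma discrep {n : ℕ} {S : ℕ → F} {φ : F[X]} (hφ : Annihilates n S φ)
    (h : ¬ AnnCond (n + 1) S φ) :
    φ.natDegree ≤ n ∧
      ∑ j ∈ Finset.range (φ.natDegree + 1), φ.coeff j * S (n - φ.natDegree + j) ≠ 0 := by
  unfold AnnCond at h
  push_neg at h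
  obtain ⟨t, ht, hne⟩ := h
  have hd : φ.natDegree ≤ n := by omega
  have heq : t = n - φ.natDegree := by
    by_contra h'
    exact hne (hφ.2 t (by omega))
  rw [heq] at hne
  exact ⟨hd, hne⟩

lemma sum_coeff_trunc (φ : F[X]) {N : ℕ} (h : φ.natDegree ≤ N) (f : ℕ → F) :
    ∑ j ∈ Finset.range (N + 1), φ.coeff j * f j
      = ∑ j ∈ Finset.range (φ.natDegree + 1), φ.coeff j * f j := by
  refine (Finset.sum_subset ?_ ?_).symm
  · intro x hx
    simp only [Finset.mem_range] at *
    omega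
  · intro x _ hx2
    simp only [Finset.mem_range] at hx2
    rw [Polynomial.coeff_eq_zero_of_natDegree_lt (by omega), zero_mul]

lemma shift_sum (φ : F[X]) (a N : ℕ) (h : a ≤ N) (f : ℕ → F) :
    ∑ j ∈ Finset.range (N + 1), (φ * X ^ a).coeff j * f j
      = ∑ i ∈ Finset.range (N + 1 - a), φ.coeff i * f (a + i) := by
  simp only [Polynomial.coeff_mul_X_pow']
  rw [Finset.range_eq_Ico, ← Finset.sum_Ico_consecutive _ (Nat.zero_le a) (by omega : a ≤ N + 1)]
  have h1 : ∑ j ∈ Finset.Ico 0 a, (if a ≤ j then φ.coeff (j - a) else 0) * f j = 0 := by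
    apply Finset.sum_eq_zero
    intro j hj
    simp only [Finset.mem_Ico] at hj
    rw [if_neg (by omega), zero_mul]
  rw [h1, zero_add, Finset.sum_Ico_eq_sum_range]
  apply Finset.sum_congr rfl
  intro i _
  rw [if_pos (by omega)]
  congr 2
  omega

lemma lower_bound {n : ℕ} {S : ℕ → F} {φ ψ : F[X]}
    (hφ : Annihilates n S φ) (hdle : φ.natDegree ≤ n)
    (hδ : ∑ j ∈ Finset.range (φ.natDegree + 1), φ.coeff j * S (n - φ.natDegree + j) ≠ 0)
    (hψ : Annihilates (n + 1) S ψ) :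
    n + 1 ≤ φ.natDegree + ψ.natDegree := by
  by_contra hcon
  push_neg at hcon
  set L := φ.natDegree with hL
  set d := ψ.natDegree with hd
  have hld : L + d ≤ n := by omega
  set r := n - L - d with hr
  have key : ∑ i ∈ Finset.range (L + 1), ∑ j ∈ Finset.range (d + 1),
      φ.coeff i * (ψ.coeff j * S (r + i + j)) = 0 := by
    apply Finset.sum_eq_zero
    intro i hi
    simp only [Finset.mem_range] at hi
    rw [← Finset.mul_sum]
    have h0 := hψ.2 (r + i) (by omega)
    rw [← hd] at h0
    have h1 : ∑ j ∈ Finset.range (d + 1), ψ.coeff j * S (r + i + j) = 0 := by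
      rw [← h0]
    rw [h1, mul_zero]
  have swap : ∑ i ∈ Finset.range (L + 1), ∑ j ∈ Finset.range (d + 1),
        φ.coeff i * (ψ.coeff j * S (r + i + j))
      = ∑ j ∈ Finset.range (d + 1), ψ.coeff j *
          ∑ i ∈ Finset.range (L + 1), φ.coeff i * S (r + j + i) := by
    rw [Finset.sum_comm]
    apply Finset.sum_congr rfl
    intro j _
    rw [Finset.mul_sum]
    apply Finset.sum_congr rfl
    intro i _
    rw [show r + i + j = r + j + i by omega]
    ring
  rw [swap, Finset.sum_range_succ] at key
  have hzero : ∑ j ∈ Finset.range d, ψ.coeff j *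
      ∑ i ∈ Finset.range (L + 1), φ.coeff i * S (r + j + i) = 0 := by
    apply Finset.sum_eq_zero
    intro j hj
    simp only [Finset.mem_range] at hj
    have h0 := hφ.2 (r + j) (by omega)
    rw [← hL] at h0
    rw [h0, mul_zero]
  rw [hzero, zero_add] at key
  have hrd : r + d = n - L := by omega
  rw [hrd] at key
  exact hδ (by
    rcases mul_eq_zero.mp key with h | h
    · exact absurd h (by
        rw [hd]
        exact Polynomial.leadingCoeff_ne_zero.mpr hψ.1)
    · exact h)

lemma construct {n m L e : ℕ} {S : ℕ → F} {φ χ : F[X]}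
    (hm : m < n) (hme : m + 1 = L + e) (hLn : L ≤ n) (hL1 : 1 ≤ L)
    (hφ : Annihilates n S φ) (hφd : φ.natDegree = L)
    (hχ : Annihilates m S χ) (hχd : χ.natDegree = e)
    (hδ' : ∑ j ∈ Finset.range (e + 1), χ.coeff j * S (m - e + j) ≠ 0) :
    ∃ ρ : F[X], Annihilates (n + 1) S ρ ∧ ρ.natDegree = max L (n + 1 - L) := by
  set D := max L (n + 1 - L) with hD
  have hDL : L ≤ D := le_max_left _ _
  have hDn1 : n + 1 - L ≤ D := le_max_right _ _
  have hDn : D ≤ n := max_le hLn (by omega)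
  set a := D - L with ha
  set b := D + L - 1 - n with hb
  set δ := ∑ j ∈ Finset.range (L + 1), φ.coeff j * S (n - L + j) with hδdef
  set δ' := ∑ j ∈ Finset.range (e + 1), χ.coeff j * S (m - e + j) with hδ'def
  set c := δ * δ'⁻¹ with hc
  set ρ := φ * X ^ a - C c * (χ * X ^ b) with hρ
  have hab : L + a = D := by omega
  have hbe : b + e + 1 ≤ D := by omega
  have hcoeffD : ρ.coeff D = φ.leadingCoeff := by
    rw [hρ, Polynomial.coeff_sub, Polynomial.coeff_C_mul, Polynomial.coeff_mul_X_pow',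
      Polynomial.coeff_mul_X_pow', if_pos (by omega : a ≤ D),
      if_pos (by omega : b ≤ D),
      Polynomial.coeff_eq_zero_of_natDegree_lt (by rw [hχd]; omega : χ.natDegree < D - b),
      mul_zero, sub_zero, show D - a = L by omega]
    simp [Polynomial.leadingCoeff, hφd]
  have hlcne : φ.leadingCoeff ≠ 0 := Polynomial.leadingCoeff_ne_zero.mpr hφ.1
  have hρne : ρ ≠ 0 := fun h => hlcne (by rw [← hcoeffD, h, Polynomial.coeff_zero])
  have hdegle : ρ.natDegree ≤ D := by
    apply le_trans (Polynomial.natDegree_sub_le _ _)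
    apply max_le
    · exact le_trans (Polynomial.natDegree_mul_le)
        (by rw [hφd, natDegree_X_pow]; omega)
    · exact le_trans (Polynomial.natDegree_mul_le)
        (by
          have := le_trans (Polynomial.natDegree_mul_le (p := χ) (q := X ^ b))
            (by rw [hχd, natDegree_X_pow]; omega : χ.natDegree + (X ^ b : F[X]).natDegree ≤ D)
          simpa using this)
  have hdeg : ρ.natDegree = D :=
    le_antisymm hdegle (Polynomial.le_natDegree_of_ne_zero (hcoeffD ▸ hlcne))
  refine ⟨ρ, ⟨hρne, ?_⟩, hdeg⟩
  intro t ht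
  rw [hdeg] at ht ⊢
  have hmain : ∀ j ∈ Finset.range (D + 1), ρ.coeff j * S (t + j)
      = (φ * X ^ a).coeff j * S (t + j) - c * ((χ * X ^ b).coeff j * S (t + j)) := by
    intro j _
    rw [hρ, Polynomial.coeff_sub, Polynomial.coeff_C_mul]
    ring
  rw [Finset.sum_congr rfl hmain, Finset.sum_sub_distrib, ← Finset.mul_sum,
    shift_sum φ a D (by omega) (fun j => S (t + j)),
    shift_sum χ b D (by omega) (fun j => S (t + j))]
  have hra : D + 1 - a = L + 1 := by omega
  have hrb : D + 1 - b = (n + 1 - L) + 1 := by omega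
  rw [hra, hrb, sum_coeff_trunc χ (by rw [hχd]; omega) (fun i => S (t + (b + i))), hχd]
  simp only [← add_assoc]
  rcases Nat.lt_or_ge t (n - D) with hlt | hge
  · -- all three sums vanish via annihilation
    have h1 := hφ.2 (t + a) (by rw [hφd]; omega)
    rw [hφd] at h1
    have h2 := hχ.2 (t + b) (by rw [hχd]; omega)
    rw [hχd] at h2
    rw [h1, h2, mul_zero, sub_zero]
  · -- t = n - D : cancellation of discrepancies
    have hta : t + a = n - L := by omega
    have htb : t + b = m - e := by omega
    rw [hta, htb, ← hδdef, ← hδ'def, hc]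
    field_simp
    ring

lemma jump (S : ℕ → F) (n : ℕ) :
    LC (n + 1) S = LC n S ∨
      (LC n S < LC (n + 1) S ∧ LC (n + 1) S = n + 1 - LC n S) := by
  induction n using Nat.strong_induction_on with
  | _ n IH =>
  obtain ⟨φ, hφ, hdeg⟩ := lc_spec n S
  by_cases hc : AnnCond (n + 1) S φ
  · exact Or.inl (le_antisymm (hdeg ▸ lc_le ⟨hφ.1, hc⟩) (lc_mono (Nat.le_succ n) S))
  · obtain ⟨hLn, hδ⟩ := discrep hφ hc
    rw [hdeg] at hLn hδ
    set L := LC n S with hL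
    -- lower bound : n + 1 - L ≤ LC (n+1) S
    obtain ⟨ψ, hψ, hψdeg⟩ := lc_spec (n + 1) S
    have hlow : n + 1 ≤ L + LC (n + 1) S := by
      have h := lower_bound hφ (hdeg ▸ hLn) (hdeg ▸ hδ) hψ
      omega
    have hmono : L ≤ LC (n + 1) S := lc_mono (Nat.le_succ n) S
    -- upper bound : ∃ annihilator of degree max L (n+1-L)
    have hup : LC (n + 1) S ≤ max L (n + 1 - L) := by
      rcases Nat.eq_zero_or_pos L with hL0 | hL1
      · have : max L (n + 1 - L) = n + 1 := by omega
        rw [this]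
        have := lc_le (ann_Xpow (n + 1) S)
        rwa [natDegree_X_pow] at this
      · -- find the last jump point m
        have hn1 : 1 ≤ n := by omega
        have hAne : n - 1 ∈ {k | L ≤ LC (k + 1) S} := by
          simp only [Set.mem_setOf_eq, show n - 1 + 1 = n by omega, hL, le_refl]
        set m := sInf {k | L ≤ LC (k + 1) S} with hmdef
        have hmem : L ≤ LC (m + 1) S := Nat.sInf_mem (Set.nonempty_of_mem hAne)
        have hm_le : m ≤ n - 1 := Nat.sInf_le hAne
        have hm_lt : m < n := by omega
        have hLm1 : LC (m + 1) S = L :=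
          le_antisymm (lc_mono (by omega) S) hmem
        have hLm : LC m S < L := by
          rcases Nat.eq_zero_or_pos m with h0 | h0
          · rw [h0, lc_zero]; omega
          · by_contra hcon
            push_neg at hcon
            have : m - 1 ∈ {k | L ≤ LC (k + 1) S} := by
              simp only [Set.mem_setOf_eq, show m - 1 + 1 = m by omega]
              exact hcon
            have := Nat.sInf_le this
            omega
        have hLmm : LC m S ≤ m := lc_le_self m S
        have hme : m + 1 = L + LC m S := by
          rcases IH m hm_lt with h | ⟨h1, h2⟩
          · omega
          · omega
        obtain ⟨χ, hχ, hχdeg⟩ := lc_spec m S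
        have hχc : ¬ AnnCond (m + 1) S χ := by
          intro h
          have := lc_le ⟨hχ.1, h⟩
          omega
        obtain ⟨hem, hδ'⟩ := discrep hχ hχc
        obtain ⟨ρ, hρ, hρdeg⟩ := construct hm_lt (by omega : m + 1 = L + LC m S)
          hLn hL1 hφ hdeg hχ hχdeg (hχdeg ▸ hδ')
        exact hρdeg ▸ lc_le hρ
    rcases le_or_gt (n + 1 - L) L with hcase | hcase
    · left
      rw [max_eq_left hcase] at hup
      omega
    · right
      rw [max_eq_right (le_of_lt hcase)] at hup
      constructor <;> omega

end Helpers

/-- Linear-complexity jump: for nontrivial `s = S|n`, either `LC_{n+1} = LC_n` or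
`LC_{n+1} = n+1−LC_n > LC_n`; and if no minimal polynomial of `s` annihilates
`S|(n+1)` then `LC_{n+1} = max{LC_n, n+1−LC_n}`. -/
theorem linearComplexity_jump {F : Type*} [Field F] (n : ℕ) (hn : 1 ≤ n) (S : ℕ → F)
    (hnt : ∃ k < n, S k ≠ 0) :
    (LC (n + 1) S = LC n S ∨
        (LC (n + 1) S = n + 1 - LC n S ∧ LC n S < LC (n + 1) S)) ∧
      ((∀ φ : Polynomial F, Annihilates n S φ → φ.natDegree = LC n S →
          ¬ Annihilates (n + 1) S φ) →
        LC (n + 1) S = max (LC n S) (n + 1 - LC n S)) := by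
  constructor
  · rcases jump S n with h | ⟨h1, h2⟩
    · exact Or.inl h
    · exact Or.inr ⟨h2, h1⟩
  · intro H
    have hne : LC (n + 1) S ≠ LC n S := by
      intro heq
      obtain ⟨ψ, hψ, hψdeg⟩ := lc_spec (n + 1) S
      exact H ψ ⟨hψ.1, annCond_mono (Nat.le_succ n) hψ.2⟩ (by omega) hψ
    rcases jump S n with h | ⟨h1, h2⟩
    · exact absurd h hne
    · rw [max_eq_right (by omega), h2]
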